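/- For a, b in a unital complex Banach algebra A, the A-valued entire function f(λ) = e^{λa} e^{-λb} has power series expansion f(λ) = ∑_{n=0}^∞ λ^n C_{a,b}^n(1) / n! valid for all λ ∈ ℂ. -/

import Mathlib

open NormedSpace ContinuousLinearMap

section aux

variable {A : Type*} [NormedRing A] [NormedAlgebra ℂ A] [CompleteSpace A]

private lemma aux_expL (x c : A) : exp (ContinuousLinearMap.mul ℂ A x) c = exp x * c := by
  have h1 : HasSum (fun n : ℕ => ((n.factorial : ℂ))⁻¹ • (ContinuousLinearMap.mul ℂ A x) ^ n)
      (exp (ContinuousLinearMap.mul ℂ A x)) := exp_series_hasSum_exp' _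
  have h2 := (ContinuousLinearMap.apply ℂ A c).hasSum h1
  have h3 : HasSum (fun n : ℕ => ((n.factorial : ℂ))⁻¹ • (x ^ n * c)) (exp x * c) := by
    simpa [smul_mul_assoc] using (exp_series_hasSum_exp' (𝕂 := ℂ) x).mul_right c
  refine h2.unique ?_
  convert h3 using 2 with n
  · rfl
  simp only [ContinuousLinearMap.apply_apply, ContinuousLinearMap.smul_apply]
  congr 1
  induction n with
  | zero => simp
  | succ k ih =>
    rw [pow_succ', pow_succ', ContinuousLinearMap.mul_apply, mul_apply', ih, mul_assoc]

private lemma aux_expR (x : A) : exp ((ContinuousLinearMap.mul ℂ A).flip x) 1 = exp x := by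
  have h1 : HasSum
      (fun n : ℕ => ((n.factorial : ℂ))⁻¹ • ((ContinuousLinearMap.mul ℂ A).flip x) ^ n)
      (exp ((ContinuousLinearMap.mul ℂ A).flip x)) := exp_series_hasSum_exp' _
  have h2 := (ContinuousLinearMap.apply ℂ A 1).hasSum h1
  refine h2.unique ?_
  convert exp_series_hasSum_exp' (𝕂 := ℂ) x using 2 with n
  · rfl
  simp only [ContinuousLinearMap.apply_apply, ContinuousLinearMap.smul_apply]
  congr 1
  induction n with
  | zero => simp
  | succ k ih =>
    rw [pow_succ', ContinuousLinearMap.mul_apply, ih, flip_apply, mul_apply', ← pow_succ]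

end aux

theorem stmt_3 {A : Type*} [NormedRing A] [NormedAlgebra ℂ A] [CompleteSpace A]
    (a b : A) (lam : ℂ) :
    HasSum (fun n : ℕ => ((n.factorial : ℂ))⁻¹ • lam ^ n • ((fun x => a * x - x * b)^[n] 1))
      (NormedSpace.exp (lam • a) * NormedSpace.exp (-(lam • b))) := by
  set L : A →L[ℂ] A := ContinuousLinearMap.mul ℂ A (lam • a) with hL
  set R : A →L[ℂ] A := (ContinuousLinearMap.mul ℂ A).flip (lam • b) with hR
  have hcomm : Commute L (-R) := by
    show L * -R = -R * L
    ext x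
    simp [hL, hR, ContinuousLinearMap.mul_apply, mul_assoc]
  have hexp : exp (L - R) = exp L * exp (-R) := by
    let +nondep : NormedAlgebra ℚ (A →L[ℂ] A) := .restrictScalars ℚ ℂ (A →L[ℂ] A)
    rw [sub_eq_add_neg, exp_add_of_commute hcomm]
  have h1 : HasSum (fun n : ℕ => ((n.factorial : ℂ))⁻¹ • (L - R) ^ n)
      (exp (L - R)) := exp_series_hasSum_exp' _
  have h2 := (ContinuousLinearMap.apply ℂ A 1).hasSum h1
  have key : ∀ n : ℕ, ((L - R) ^ n) 1 = lam ^ n • ((fun x => a * x - x * b)^[n] 1) := by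
    intro n
    induction n with
    | zero => simp
    | succ k ih =>
      rw [pow_succ', ContinuousLinearMap.mul_apply, ih, Function.iterate_succ_apply']
      simp only [hL, hR, ContinuousLinearMap.sub_apply, mul_apply', flip_apply]
      simp only [smul_mul_assoc, mul_smul_comm, smul_smul, pow_succ]
      module
  have hval : (exp (L - R)) 1 = exp (lam • a) * exp (-(lam • b)) := by
    rw [hexp, ContinuousLinearMap.mul_apply]
    have hnegR : -R = (ContinuousLinearMap.mul ℂ A).flip (-(lam • b)) := by
      rw [map_neg]
    rw [hnegR, aux_expR, hL, aux_expL]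
  rw [← hval]
  convert h2 using 2 with n
  · rfl
  rw [ContinuousLinearMap.apply_apply, ContinuousLinearMap.smul_apply, key]
  rfl
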